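/- Let f : ℝ → ℂ be a twice continuously differentiable function satisfying f''(t) = (t² + 1)·f(t) for all t ∈ ℝ, and assume f is square-integrable on ℝ (f ∈ L²(ℝ)). Then f is identically zero. In other words, the L²-kernel of the operator −d²/dt² + t² + 1 is trivial. -/

import Mathlib

open MeasureTheory Set

lemma aux_not_int_Ici {G : ℝ → ℝ} (hG : Integrable G) {a c : ℝ} (hc : 0 < c)
    (h : ∀ t ∈ Set.Ici a, c ≤ G t) : False := by
  have h1 : IntegrableOn G (Set.Ici a) := hG.integrableOn
  have h2 : Integrable (fun _ : ℝ => c) (volume.restrict (Set.Ici a)) := by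
    refine h1.mono' aestronglyMeasurable_const ?_
    refine (ae_restrict_iff' measurableSet_Ici).mpr (ae_of_all _ fun t ht => ?_)
    rw [Real.norm_eq_abs, abs_of_pos hc]
    exact h t ht
  rw [integrable_const_iff] at h2
  rcases h2 with h2 | h2
  · exact hc.ne' h2
  · have h2 := h2.measure_univ_lt_top
    rw [Measure.restrict_apply_univ, Real.volume_Ici] at h2
    exact (lt_irrefl _ h2).elim

lemma aux_not_int_Iic {G : ℝ → ℝ} (hG : Integrable G) {a c : ℝ} (hc : 0 < c)
    (h : ∀ t ∈ Set.Iic a, c ≤ G t) : False := by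
  have h1 : IntegrableOn G (Set.Iic a) := hG.integrableOn
  have h2 : Integrable (fun _ : ℝ => c) (volume.restrict (Set.Iic a)) := by
    refine h1.mono' aestronglyMeasurable_const ?_
    refine (ae_restrict_iff' measurableSet_Iic).mpr (ae_of_all _ fun t ht => ?_)
    rw [Real.norm_eq_abs, abs_of_pos hc]
    exact h t ht
  rw [integrable_const_iff] at h2
  rcases h2 with h2 | h2
  · exact hc.ne' h2
  · have h2 := h2.measure_univ_lt_top
    rw [Measure.restrict_apply_univ, Real.volume_Iic] at h2
    exact (lt_irrefl _ h2).elim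

/-- The `L²`-kernel of `-d²/dt² + t² + 1` is trivial: any `C²` square-integrable
solution of `f'' = (t² + 1) f` vanishes identically. -/
theorem no_L2_solution
    (f : ℝ → ℂ) (hf : ContDiff ℝ 2 f)
    (hode : ∀ t : ℝ, deriv (deriv f) t = ((t : ℂ) ^ 2 + 1) * f t)
    (hL2 : MemLp f 2 volume) :
    ∀ t : ℝ, f t = 0 := by
  have hf1 : Differentiable ℝ f := hf.differentiable two_ne_zero
  have hfd : Differentiable ℝ (deriv f) := by
    have h2 : (2 : WithTop ℕ∞) = 1 + 1 := by norm_num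
    exact ((contDiff_succ_iff_deriv.mp (h2 ▸ hf)).2.2).differentiable one_ne_zero
  set F := deriv f with hFdef
  -- derivatives of real/imaginary parts
  have hre : ∀ (g : ℝ → ℂ), Differentiable ℝ g → ∀ t : ℝ,
      HasDerivAt (fun s => (g s).re) (deriv g t).re t := fun g hg t => by
    have h := Complex.reCLM.hasFDerivAt.comp_hasDerivAt t (hg t).hasDerivAt
    simp only [Complex.reCLM_apply, Function.comp_def] at h
    exact h
  have him : ∀ (g : ℝ → ℂ), Differentiable ℝ g → ∀ t : ℝ,
      HasDerivAt (fun s => (g s).im) (deriv g t).im t := fun g hg t => by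
    have h := Complex.imCLM.hasFDerivAt.comp_hasDerivAt t (hg t).hasDerivAt
    simp only [Complex.imCLM_apply, Function.comp_def] at h
    exact h
  set G : ℝ → ℝ := fun t => (f t).re ^ 2 + (f t).im ^ 2 with hGdef
  set H : ℝ → ℝ := fun t => 2 * ((f t).re * (F t).re) + 2 * ((f t).im * (F t).im) with hHdef
  set K : ℝ → ℝ := fun t =>
    2 * ((F t).re ^ 2 + (F t).im ^ 2) + (2 * (t ^ 2 + 1)) * ((f t).re ^ 2 + (f t).im ^ 2)
    with hKdef
  -- re/im of the second derivative
  have hode_re : ∀ t : ℝ, (deriv F t).re = (t ^ 2 + 1) * (f t).re := fun t => by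
    rw [hode t]
    have : ((t : ℂ) ^ 2 + 1) = ((t ^ 2 + 1 : ℝ) : ℂ) := by push_cast; ring
    rw [this, Complex.re_ofReal_mul]
  have hode_im : ∀ t : ℝ, (deriv F t).im = (t ^ 2 + 1) * (f t).im := fun t => by
    rw [hode t]
    have : ((t : ℂ) ^ 2 + 1) = ((t ^ 2 + 1 : ℝ) : ℂ) := by push_cast; ring
    rw [this, Complex.im_ofReal_mul]
  have hG : ∀ t : ℝ, HasDerivAt G (H t) t := fun t => by
    have h1 := ((hre f hf1 t).pow 2).add ((him f hf1 t).pow 2)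
    refine h1.congr_deriv ?_
    simp [hHdef]; ring
  have hH : ∀ t : ℝ, HasDerivAt H (K t) t := fun t => by
    have h1 := (((hre f hf1 t).mul (hre F hfd t)).const_mul 2).add
      (((him f hf1 t).mul (him F hfd t)).const_mul 2)
    refine h1.congr_deriv ?_
    rw [hode_re t, hode_im t]
    simp [hKdef]; ring
  have hK0 : ∀ t : ℝ, 0 ≤ K t := fun t => by
    have := sq_nonneg (F t).re
    have := sq_nonneg (F t).im
    have := sq_nonneg (f t).re
    have := sq_nonneg (f t).im
    have := sq_nonneg t
    simp only [hKdef]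
    nlinarith
  have hHdiff : Differentiable ℝ H := fun t => (hH t).differentiableAt
  have hGdiff : Differentiable ℝ G := fun t => (hG t).differentiableAt
  have hHmono : Monotone H := by
    apply monotone_of_deriv_nonneg hHdiff
    intro t; rw [(hH t).deriv]; exact hK0 t
  have hG0 : ∀ t : ℝ, 0 ≤ G t := fun t => by positivity
  -- G is integrable
  have hGint : Integrable G := by
    have h := (memLp_two_iff_integrable_sq_norm hL2.aestronglyMeasurable).mp hL2
    have he : (fun t => ‖f t‖ ^ 2) = G := by
      funext t
      rw [Complex.sq_norm, Complex.normSq_apply, hGdef]; ring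
    rwa [he] at h
  -- H vanishes identically
  have hH0 : ∀ t : ℝ, H t = 0 := by
    intro t₀
    rcases lt_trichotomy (H t₀) 0 with hneg | h0 | hpos
    · exfalso
      have key : ∀ t ∈ Set.Iic (t₀ - 1), -H t₀ ≤ G t := by
        intro t ht
        have hmv := (convex_Iic t₀).image_sub_le_mul_sub_of_deriv_le
          hGdiff.continuous.continuousOn
          (hGdiff.differentiableOn)
          (C := H t₀) (fun x hx => by
            rw [(hG x).deriv]
            exact hHmono (le_of_lt (by simpa using hx)))
          t (by simp at ht ⊢; linarith) t₀ (by simp) (by simp at ht; linarith)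
        have := hG0 t₀
        simp only [Set.mem_Iic] at ht
        nlinarith
      exact aux_not_int_Iic hGint (by linarith) key
    · exact h0
    · exfalso
      have key : ∀ t ∈ Set.Ici (t₀ + 1), H t₀ ≤ G t := by
        intro t ht
        have hmv := (convex_Ici t₀).mul_sub_le_image_sub_of_le_deriv
          hGdiff.continuous.continuousOn
          (hGdiff.differentiableOn)
          (C := H t₀) (fun x hx => by
            rw [(hG x).deriv]
            exact hHmono (le_of_lt (by simpa using hx)))
          t₀ (by simp) t (by simp at ht ⊢; linarith) (by simp at ht; linarith)
        have := hG0 t₀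
        simp only [Set.mem_Ici] at ht
        nlinarith
      exact aux_not_int_Ici hGint hpos key
  -- hence K vanishes, so f vanishes
  intro t
  have hKt : K t = 0 := by
    have hHfun : H = fun _ => (0 : ℝ) := funext hH0
    have := (hH t).deriv
    rw [hHfun, deriv_const] at this
    exact this.symm
  have h1 : (f t).re ^ 2 + (f t).im ^ 2 = 0 := by
    simp only [hKdef] at hKt
    nlinarith [sq_nonneg (F t).re, sq_nonneg (F t).im, sq_nonneg (f t).re,
      sq_nonneg (f t).im, sq_nonneg t]
  have hre0 : (f t).re = 0 := by nlinarith [sq_nonneg (f t).re, sq_nonneg (f t).im]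
  have him0 : (f t).im = 0 := by nlinarith [sq_nonneg (f t).re, sq_nonneg (f t).im]
  exact Complex.ext hre0 him0
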